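/- Let Z be a strongly flat real Banach space and let Y be a real Banach space. Suppose that B : Z → Y is a bounded linear operator and y₀* is in the unit sphere of Y* such that lim sup_{t→0⁺} ( ‖B* y₀* + t B* h*‖ + ‖B* y₀* − t B* h*‖ − 2‖B* y₀*‖ ) / t ≤ 0 for every h* in the unit sphere of Y*, and that the functional B* y₀* ∈ Z* attains its norm on Z (there is z₀ in the unit ball of Z with |(B* y₀*)(z₀)| = ‖B* y₀*‖). Then B has finite rank, i.e. the range of B is a finite-dimensional subspace of Y. -/

import Mathlib

open Filter Topology

/-- The set of directions of flatness of `Z` at `z₀`. -/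
def FlatDirections {Z : Type*} [NormedAddCommGroup Z] (z₀ : Z) : Set Z :=
  {z : Z | ‖z₀ + z‖ ≤ 1 ∧ ‖z₀ - z‖ ≤ 1}

/-- A Banach space `Z` is strongly flat if for every `z₀` in its unit sphere, the
quotient of `Z` by the closed linear span of the directions of flatness at `z₀` is
finite-dimensional. -/
def StronglyFlat (Z : Type*) [NormedAddCommGroup Z] [NormedSpace ℝ Z] : Prop :=
  ∀ z₀ : Z, ‖z₀‖ = 1 →
    FiniteDimensional ℝ (Z ⧸ (Submodule.span ℝ (FlatDirections z₀)).topologicalClosure)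

/-- Auxiliary: if the limsup in the hypothesis is `≤ 0` and the quotient is bounded
below by a constant `c` for all `t > 0`, then `c ≤ 0`. -/
lemma limsup_aux {Z : Type*} [NormedAddCommGroup Z] [NormedSpace ℝ Z]
    {Y : Type*} [NormedAddCommGroup Y] [NormedSpace ℝ Y]
    (B : Z →L[ℝ] Y) (y₀star hstar : Y →L[ℝ] ℝ)
    (hlim : Filter.limsup
        (fun t : ℝ =>
          (‖y₀star ∘L B + t • (hstar ∘L B)‖ + ‖y₀star ∘L B - t • (hstar ∘L B)‖
            - 2 * ‖y₀star ∘L B‖) / t)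
        (𝓝[>] (0 : ℝ)) ≤ 0)
    {c : ℝ}
    (hc : ∀ t : ℝ, 0 < t →
      c ≤ (‖y₀star ∘L B + t • (hstar ∘L B)‖ + ‖y₀star ∘L B - t • (hstar ∘L B)‖
            - 2 * ‖y₀star ∘L B‖) / t) :
    c ≤ 0 := by
  refine le_trans ?_ hlim
  apply Filter.le_limsup_of_frequently_le
  · exact Filter.Eventually.frequently
      (by filter_upwards [self_mem_nhdsWithin] with t ht using hc t ht)
  · refine Filter.isBoundedUnder_of_eventually_le
      (a := 2 * ‖hstar ∘L B‖) ?_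
    filter_upwards [self_mem_nhdsWithin] with t ht
    have ht' : (0 : ℝ) < t := ht
    rw [div_le_iff₀ ht']
    have hsm : ‖t • (hstar ∘L B)‖ = t * ‖hstar ∘L B‖ := by
      rw [norm_smul t (hstar ∘L B), Real.norm_eq_abs, abs_of_pos ht']
    have h1 : ‖y₀star ∘L B + t • (hstar ∘L B)‖ ≤ ‖y₀star ∘L B‖ + t * ‖hstar ∘L B‖ := by
      calc ‖y₀star ∘L B + t • (hstar ∘L B)‖ ≤ ‖y₀star ∘L B‖ + ‖t • (hstar ∘L B)‖ :=
            norm_add_le _ _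
        _ = ‖y₀star ∘L B‖ + t * ‖hstar ∘L B‖ := by rw [hsm]
    have h2 : ‖y₀star ∘L B - t • (hstar ∘L B)‖ ≤ ‖y₀star ∘L B‖ + t * ‖hstar ∘L B‖ := by
      calc ‖y₀star ∘L B - t • (hstar ∘L B)‖ ≤ ‖y₀star ∘L B‖ + ‖t • (hstar ∘L B)‖ :=
            norm_sub_le _ _
        _ = ‖y₀star ∘L B‖ + t * ‖hstar ∘L B‖ := by rw [hsm]
    nlinarith

/-- If `Z` is strongly flat, `B : Z → Y` is a bounded linear operator, and `y₀*` in the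
unit sphere of `Y*` is such that
`limsup_{t→0⁺} (‖B* y₀* + t B* h*‖ + ‖B* y₀* − t B* h*‖ − 2‖B* y₀*‖)/t ≤ 0`
for all `h*` in the unit sphere of `Y*` and `B* y₀*` attains its norm on `Z`,
then `B` has finite rank. -/
theorem lemma_on_Z
    {Z : Type*} [NormedAddCommGroup Z] [NormedSpace ℝ Z] [CompleteSpace Z]
    {Y : Type*} [NormedAddCommGroup Y] [NormedSpace ℝ Y] [CompleteSpace Y]
    (hZ : StronglyFlat Z) (B : Z →L[ℝ] Y)
    (y₀star : Y →L[ℝ] ℝ) (hy₀star : ‖y₀star‖ = 1)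
    (hlim : ∀ hstar : Y →L[ℝ] ℝ, ‖hstar‖ = 1 →
      Filter.limsup
        (fun t : ℝ =>
          (‖y₀star ∘L B + t • (hstar ∘L B)‖ + ‖y₀star ∘L B - t • (hstar ∘L B)‖
            - 2 * ‖y₀star ∘L B‖) / t)
        (𝓝[>] (0 : ℝ)) ≤ 0)
    (hattain : ∃ z₀ : Z, ‖z₀‖ ≤ 1 ∧ |(y₀star ∘L B) z₀| = ‖y₀star ∘L B‖) :
    FiniteDimensional ℝ (LinearMap.range (B : Z →ₗ[ℝ] Y)) := by
  by_cases hf0 : y₀star ∘L B = 0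
  · -- degenerate case: then B = 0
    have hB : ∀ z : Z, B z = 0 := by
      intro z
      by_contra hzne
      obtain ⟨g, hg1, hgz⟩ := exists_dual_vector ℝ (B z) (norm_ne_zero_iff.mpr hzne)
      have key : 2 * ‖g ∘L B‖ ≤ 0 := by
        apply limsup_aux B y₀star g (hlim g hg1)
        intro t ht
        rw [le_div_iff₀ ht, hf0]
        have hsm : ‖t • (g ∘L B)‖ = t * ‖g ∘L B‖ := by
          rw [norm_smul t (g ∘L B), Real.norm_eq_abs, abs_of_pos ht]
        simp only [zero_add, zero_sub, norm_neg, norm_zero, hsm]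
        ring_nf
        nlinarith [norm_nonneg (g ∘L B)]
      have hg0 : g ∘L B = 0 := by
        have : ‖g ∘L B‖ = 0 := le_antisymm (by linarith) (norm_nonneg _)
        exact norm_eq_zero.mp this
      have : g (B z) = 0 := by
        have := congrArg (fun q => q z) (congrArg (fun q : Z →L[ℝ] ℝ => (q : Z → ℝ)) hg0)
        simpa using this
      rw [hgz] at this
      exact hzne (norm_eq_zero.mp (by exact_mod_cast this))
    have hrange : LinearMap.range (B : Z →ₗ[ℝ] Y) = ⊥ := by
      rw [LinearMap.range_eq_bot]
      ext z
      exact hB z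
    rw [hrange]
    infer_instance
  · -- main case
    have hfpos : 0 < ‖y₀star ∘L B‖ := norm_pos_iff.mpr hf0
    obtain ⟨z₀, hz₀le, habs⟩ := hattain
    -- normalize the sign
    obtain ⟨z₁, hz₁, hfz₁⟩ : ∃ z₁ : Z, ‖z₁‖ = 1 ∧ (y₀star ∘L B) z₁ = ‖y₀star ∘L B‖ := by
      have hz₀ : ‖z₀‖ = 1 := by
        have h1 : ‖y₀star ∘L B‖ ≤ ‖y₀star ∘L B‖ * ‖z₀‖ := by
          calc ‖y₀star ∘L B‖ = |(y₀star ∘L B) z₀| := habs.symm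
            _ = ‖(y₀star ∘L B) z₀‖ := rfl
            _ ≤ ‖y₀star ∘L B‖ * ‖z₀‖ := (y₀star ∘L B).le_opNorm z₀
        have : 1 ≤ ‖z₀‖ := by
          by_contra hlt
          push_neg at hlt
          nlinarith
        linarith
      rcases le_or_gt 0 ((y₀star ∘L B) z₀) with h | h
      · exact ⟨z₀, hz₀, by rwa [← abs_of_nonneg h]⟩
      · refine ⟨-z₀, by simpa using hz₀, ?_⟩
        rw [map_neg, ← abs_of_neg h]
        exact habs
    -- key claim: B vanishes on the flat directions at z₁
    have hker : ∀ z ∈ FlatDirections z₁, B z = 0 := by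
      intro z hz
      obtain ⟨hz1, hz2⟩ := hz
      have key : ∀ g : Y →L[ℝ] ℝ, ‖g‖ = 1 → g (B z) ≤ 0 := by
        intro g hg
        have h2 : 2 * g (B z) ≤ 0 := by
          apply limsup_aux B y₀star g (hlim g hg)
          intro t ht
          rw [le_div_iff₀ ht]
          have e1 : (y₀star ∘L B + t • (g ∘L B)) (z₁ + z) ≤ ‖y₀star ∘L B + t • (g ∘L B)‖ := by
            calc (y₀star ∘L B + t • (g ∘L B)) (z₁ + z)
                ≤ |(y₀star ∘L B + t • (g ∘L B)) (z₁ + z)| := le_abs_self _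
              _ ≤ ‖y₀star ∘L B + t • (g ∘L B)‖ * ‖z₁ + z‖ :=
                  (y₀star ∘L B + t • (g ∘L B)).le_opNorm _
              _ ≤ ‖y₀star ∘L B + t • (g ∘L B)‖ * 1 := by
                  exact mul_le_mul_of_nonneg_left hz1 (norm_nonneg _)
              _ = ‖y₀star ∘L B + t • (g ∘L B)‖ := mul_one _
          have e2 : (y₀star ∘L B - t • (g ∘L B)) (z₁ - z) ≤ ‖y₀star ∘L B - t • (g ∘L B)‖ := by
            calc (y₀star ∘L B - t • (g ∘L B)) (z₁ - z)
                ≤ |(y₀star ∘L B - t • (g ∘L B)) (z₁ - z)| := le_abs_self _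
              _ ≤ ‖y₀star ∘L B - t • (g ∘L B)‖ * ‖z₁ - z‖ :=
                  (y₀star ∘L B - t • (g ∘L B)).le_opNorm _
              _ ≤ ‖y₀star ∘L B - t • (g ∘L B)‖ * 1 := by
                  exact mul_le_mul_of_nonneg_left hz2 (norm_nonneg _)
              _ = ‖y₀star ∘L B - t • (g ∘L B)‖ := mul_one _
          have eval : (y₀star ∘L B + t • (g ∘L B)) (z₁ + z)
              + (y₀star ∘L B - t • (g ∘L B)) (z₁ - z)
              = 2 * ‖y₀star ∘L B‖ + 2 * t * g (B z) := by
            simp only [ContinuousLinearMap.add_apply, ContinuousLinearMap.sub_apply,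
              ContinuousLinearMap.smul_apply, map_add, map_sub, ContinuousLinearMap.comp_apply,
              smul_eq_mul]
            rw [← ContinuousLinearMap.comp_apply, hfz₁]
            ring
          linarith
        linarith
      by_contra hzne
      obtain ⟨g, hg1, hgz⟩ := exists_dual_vector ℝ (B z) (norm_ne_zero_iff.mpr hzne)
      have h1 := key g hg1
      have h2 : g (B z) = ‖B z‖ := by exact_mod_cast hgz
      rw [h2] at h1
      exact hzne (norm_eq_zero.mp (le_antisymm h1 (norm_nonneg _)))
    -- conclude via the strongly flat hypothesis
    haveI := hZ z₁ hz₁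
    have hle : (Submodule.span ℝ (FlatDirections z₁)).topologicalClosure
        ≤ LinearMap.ker (B : Z →ₗ[ℝ] Y) := by
      apply Submodule.topologicalClosure_minimal
      · rw [Submodule.span_le]
        intro z hz
        exact hker z hz
      · exact ContinuousLinearMap.isClosed_ker B
    have hrange : LinearMap.range (B : Z →ₗ[ℝ] Y)
        = LinearMap.range
            (((Submodule.span ℝ (FlatDirections z₁)).topologicalClosure).liftQ
              (B : Z →ₗ[ℝ] Y) hle) :=
      (Submodule.range_liftQ _ _ _).symm
    rw [hrange]
    infer_instance
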